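/- For nonzero reals v₁,…,vₙ, the tanh rule decomposes as u = (∏ⱼ sign(vⱼ)) · φ⁻¹(Σⱼ φ(|vⱼ|)), where φ(x) = log(tanh(x/2)) for x > 0 and φ⁻¹(y) = 2 tanh⁻¹(e^y) for y < 0. -/

import Mathlib

open Real

/-- Inverse hyperbolic tangent on `(-1, 1)`. -/
noncomputable def artanh (x : ℝ) : ℝ := (1 / 2) * Real.log ((1 + x) / (1 - x))

/-- `φ(x) = log(tanh(x/2))` for `x > 0`. -/
noncomputable def phi (x : ℝ) : ℝ := Real.log (Real.tanh (x / 2))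

/-- Inverse of `φ` on negative reals: `φ⁻¹(y) = 2 artanh(e^y)`. -/
noncomputable def phiInv (y : ℝ) : ℝ := 2 * _root_.artanh (Real.exp y)

lemma artanh_neg (x : ℝ) : _root_.artanh (-x) = -_root_.artanh x := by
  have : (1 + -x) / (1 - -x) = ((1 + x) / (1 - x))⁻¹ := by
    rw [inv_div]; ring_nf
  rw [_root_.artanh, _root_.artanh, this, Real.log_inv]; ring

lemma tanh_pos_of_pos {x : ℝ} (hx : 0 < x) : 0 < Real.tanh x := by
  rw [Real.tanh_eq_sinh_div_cosh]
  exact div_pos (by rwa [Real.sinh_pos_iff]) (Real.cosh_pos x)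

lemma sign_prod_pm {n : ℕ} (v : Fin n → ℝ) (hv : ∀ j, v j ≠ 0) :
    (∏ j, Real.sign (v j)) = 1 ∨ (∏ j, Real.sign (v j)) = -1 := by
  induction n with
  | zero => left; simp
  | succ m ih =>
    rw [Fin.prod_univ_succ]
    rcases ih (fun j => v j.succ) (fun j => hv j.succ) with h | h <;>
      rcases (hv 0).lt_or_gt with h0 | h0 <;>
        simp [Real.sign_of_neg, Real.sign_of_pos, h0, h]

lemma tanh_half_eq (x : ℝ) (hx : x ≠ 0) :
    Real.tanh (x / 2) = Real.sign x * Real.tanh (|x| / 2) := by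
  rcases hx.lt_or_gt with h | h
  · rw [Real.sign_of_neg h, abs_of_neg h, neg_div, Real.tanh_neg]; ring
  · rw [Real.sign_of_pos h, abs_of_pos h, one_mul]

theorem tanh_rule_decomposition (n : ℕ) (v : Fin n → ℝ) (hv : ∀ j, v j ≠ 0) :
    2 * _root_.artanh (∏ j, Real.tanh (v j / 2)) =
      (∏ j, Real.sign (v j)) * phiInv (∑ j, phi |v j|) := by
  have hP : phiInv (∑ j, phi |v j|) = 2 * _root_.artanh (∏ j, Real.tanh (|v j| / 2)) := by
    rw [phiInv, Real.exp_sum]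
    congr 2
    refine Finset.prod_congr rfl fun j _ => ?_
    rw [phi, Real.exp_log]
    exact tanh_pos_of_pos (half_pos (abs_pos.mpr (hv j)))
  have hprod : (∏ j, Real.tanh (v j / 2)) =
      (∏ j, Real.sign (v j)) * ∏ j, Real.tanh (|v j| / 2) := by
    rw [← Finset.prod_mul_distrib]
    exact Finset.prod_congr rfl fun j _ => tanh_half_eq _ (hv j)
  rw [hP, hprod]
  rcases sign_prod_pm v hv with h | h
  · rw [h, one_mul, one_mul]
  · rw [h, neg_one_mul, neg_one_mul, _root_.artanh_neg]; ring
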